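/- Theorem of the alternative: let A be an r×n real matrix, B an l×n real matrix, and E an m×n real matrix. Exactly one of the following holds: (1) there exists u ∈ ℝ^n with A u = 0, B u ≥ 0 (componentwise) and E u ≫ 0 (all components strictly positive); (2) there exist θ ∈ ℝ^r, η ∈ ℝ^l with η ≥ 0, and λ ∈ ℝ^m with λ ≥ 0, λ ≠ 0, such that Aᵀθ + Bᵀη + Eᵀλ = 0. -/

import Mathlib

open Matrix Finset

/-- Farkas' lemma, Fin-indexed, algebraic induction proof. -/
theorem farkas_fin : ∀ (k N : ℕ) (a : Fin k → (Fin N → ℝ)) (b : Fin N → ℝ),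
    (∃ lam : Fin k → ℝ, (∀ i, 0 ≤ lam i) ∧ b = ∑ i, lam i • a i) ∨
    (∃ y : Fin N → ℝ, (∀ i, a i ⬝ᵥ y ≤ 0) ∧ 0 < b ⬝ᵥ y) := by
  intro k
  induction k with
  | zero =>
    intro N a b
    by_cases hb : b = 0
    · exact Or.inl ⟨0, fun i => le_refl _, by simp [hb]⟩
    · refine Or.inr ⟨b, fun i => i.elim0, ?_⟩
      have : b ⬝ᵥ b ≠ 0 := fun h => hb ((dotProduct_self_eq_zero).mp h)
      have h2 : 0 ≤ b ⬝ᵥ b := by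
        apply Finset.sum_nonneg
        intro i _
        exact mul_self_nonneg _
      exact lt_of_le_of_ne h2 (Ne.symm this)
  | succ k IH =>
    intro N a b
    set aK := a (Fin.last k) with haK
    set a' : Fin k → (Fin N → ℝ) := fun i => a i.castSucc with ha'
    rcases IH N a' b with ⟨lam, hlam, hsum⟩ | ⟨y, hy, hby⟩
    · refine Or.inl ⟨Fin.snoc lam 0, ?_, ?_⟩
      · intro i
        refine Fin.lastCases ?_ ?_ i
        · simp
        · intro j; simpa using hlam j
      · rw [Fin.sum_univ_castSucc]
        simp [hsum]; rfl
    · by_cases hK : aK ⬝ᵥ y ≤ 0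
      · refine Or.inr ⟨y, ?_, hby⟩
        intro i
        refine Fin.lastCases hK (fun j => hy j) i
      · push_neg at hK
        set d := aK ⬝ᵥ y with hd
        set c : (Fin N → ℝ) → (Fin N → ℝ) := fun v => v - ((v ⬝ᵥ y) / d) • aK with hc
        have keydot : ∀ v w : Fin N → ℝ, c v ⬝ᵥ w = v ⬝ᵥ w - (v ⬝ᵥ y) / d * (aK ⬝ᵥ w) := by
          intro v w
          simp [hc, sub_dotProduct, smul_dotProduct, smul_eq_mul]
        rcases IH N (fun i => c (a' i)) (c b) with ⟨lam, hlam, hsum⟩ | ⟨w, hw, hbw⟩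
        · -- b ∈ cone
          set μ := b ⬝ᵥ y / d - ∑ i, lam i * ((a' i ⬝ᵥ y) / d) with hμ
          have hb' : b = (∑ i, lam i • a' i) + μ • aK := by
            have h1 : c b = ∑ i, lam i • c (a' i) := hsum
            have h2 : ∑ i, lam i • c (a' i)
                = (∑ i, lam i • a' i) - (∑ i, lam i * ((a' i ⬝ᵥ y) / d)) • aK := by
              rw [Finset.sum_smul]
              rw [← Finset.sum_sub_distrib]
              congr 1
              ext i
              simp only [hc, Pi.smul_apply, Pi.sub_apply, smul_eq_mul]
              ring
            rw [h2] at h1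
            have : b - (b ⬝ᵥ y / d) • aK
                = (∑ i, lam i • a' i) - (∑ i, lam i * ((a' i ⬝ᵥ y) / d)) • aK := h1
            have := congrArg (fun v => v + (b ⬝ᵥ y / d) • aK) this
            rw [sub_add_cancel] at this
            rw [this, hμ, sub_smul]
            abel
          have hμ0 : 0 ≤ μ := by
            have h1 : 0 < b ⬝ᵥ y / d := div_pos hby hK
            have h2 : ∑ i, lam i * ((a' i ⬝ᵥ y) / d) ≤ 0 := by
              apply Finset.sum_nonpos
              intro i _
              exact mul_nonpos_of_nonneg_of_nonpos (hlam i)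
                (div_nonpos_of_nonpos_of_nonneg (hy i) hK.le)
            rw [hμ]; linarith
          refine Or.inl ⟨Fin.snoc lam μ, ?_, ?_⟩
          · intro i
            refine Fin.lastCases ?_ ?_ i
            · simpa using hμ0
            · intro j; simpa using hlam j
          · rw [Fin.sum_univ_castSucc]
            simpa using hb'
        · -- separation
          set y' := w - ((aK ⬝ᵥ w) / d) • y with hy'
          have keydot2 : ∀ v : Fin N → ℝ, v ⬝ᵥ y' = c v ⬝ᵥ w := by
            intro v
            rw [keydot]
            simp [hy', dotProduct_sub, dotProduct_smul, smul_eq_mul]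
            ring
          refine Or.inr ⟨y', ?_, ?_⟩
          · intro i
            refine Fin.lastCases ?_ ?_ i
            · rw [keydot2]
              have hcz : c aK = 0 := by
                simp [hc, hd, div_self (ne_of_gt hK)]
                rw [div_self (show aK ⬝ᵥ y ≠ 0 from ne_of_gt hK), one_smul, sub_self]
              show c aK ⬝ᵥ w ≤ 0
              rw [hcz]
              simp
            · intro j
              rw [keydot2]
              exact hw j
          · rw [keydot2]
            exact hbw

/-- Farkas' lemma for an arbitrary finite index type. -/
theorem farkas {ι : Type*} [Fintype ι] (N : ℕ) (a : ι → (Fin N → ℝ)) (b : Fin N → ℝ) :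
    (∃ lam : ι → ℝ, (∀ i, 0 ≤ lam i) ∧ b = ∑ i, lam i • a i) ∨
    (∃ y : Fin N → ℝ, (∀ i, a i ⬝ᵥ y ≤ 0) ∧ 0 < b ⬝ᵥ y) := by
  classical
  obtain e := Fintype.equivFin ι
  rcases farkas_fin (Fintype.card ι) N (fun j => a (e.symm j)) b with ⟨lam, hlam, hsum⟩ | h
  · refine Or.inl ⟨fun i => lam (e i), fun i => hlam _, ?_⟩
    rw [hsum]
    rw [← e.symm.sum_comp (fun i => lam (e i) • a i)]
    simp
  · rcases h with ⟨y, hy, hby⟩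
    exact Or.inr ⟨y, fun i => by simpa using hy (e i), hby⟩

/-- Motzkin-type theorem of the alternative (Stoer–Witzgall 1.6.1): exactly one of the
two systems has a solution. -/
theorem theorem_of_the_alternative (r l m n : ℕ)
    (A : Matrix (Fin r) (Fin n) ℝ) (B : Matrix (Fin l) (Fin n) ℝ)
    (E : Matrix (Fin m) (Fin n) ℝ) :
    Xor'
      (∃ u : Fin n → ℝ, A.mulVec u = 0 ∧ (∀ i, 0 ≤ B.mulVec u i) ∧
        ∀ i, 0 < E.mulVec u i)
      (∃ (θ : Fin r → ℝ) (η : Fin l → ℝ) (lam : Fin m → ℝ),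
        (∀ i, 0 ≤ η i) ∧ (∀ i, 0 ≤ lam i) ∧ lam ≠ 0 ∧
        A.transpose.mulVec θ + B.transpose.mulVec η + E.transpose.mulVec lam = 0) := by
  classical
  have dot_snoc : ∀ (v w : Fin n → ℝ) (s t : ℝ),
      (Fin.snoc v s : Fin (n+1) → ℝ) ⬝ᵥ (Fin.snoc w t) = v ⬝ᵥ w + s * t := by
    intro v w s t
    simp [dotProduct, Fin.sum_univ_castSucc]
  -- the two systems cannot both be solvable
  have notboth : ¬ ((∃ u : Fin n → ℝ, A.mulVec u = 0 ∧ (∀ i, 0 ≤ B.mulVec u i) ∧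
        ∀ i, 0 < E.mulVec u i) ∧
      (∃ (θ : Fin r → ℝ) (η : Fin l → ℝ) (lam : Fin m → ℝ),
        (∀ i, 0 ≤ η i) ∧ (∀ i, 0 ≤ lam i) ∧ lam ≠ 0 ∧
        A.transpose.mulVec θ + B.transpose.mulVec η + E.transpose.mulVec lam = 0)) := by
    rintro ⟨⟨u, hAu, hBu, hEu⟩, θ, η, lam, hη, hlam, hlne, hsum⟩
    have h0 : (A.transpose.mulVec θ + B.transpose.mulVec η + E.transpose.mulVec lam) ⬝ᵥ u
        = 0 := by rw [hsum]; simp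
    have h1 : (A.transpose.mulVec θ) ⬝ᵥ u = θ ⬝ᵥ (A.mulVec u) := by
      rw [Matrix.mulVec_transpose, ← Matrix.dotProduct_mulVec]
    have h2 : (B.transpose.mulVec η) ⬝ᵥ u = η ⬝ᵥ (B.mulVec u) := by
      rw [Matrix.mulVec_transpose, ← Matrix.dotProduct_mulVec]
    have h3 : (E.transpose.mulVec lam) ⬝ᵥ u = lam ⬝ᵥ (E.mulVec u) := by
      rw [Matrix.mulVec_transpose, ← Matrix.dotProduct_mulVec]
    rw [add_dotProduct, add_dotProduct, h1, h2, h3, hAu,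
      dotProduct_zero] at h0
    have hB : 0 ≤ η ⬝ᵥ B.mulVec u :=
      Finset.sum_nonneg fun i _ => mul_nonneg (hη i) (hBu i)
    have hE : 0 < lam ⬝ᵥ E.mulVec u := by
      obtain ⟨j, hj⟩ := Function.ne_iff.mp hlne
      refine Finset.sum_pos' (fun i _ => mul_nonneg (hlam i) (hEu i).le)
        ⟨j, Finset.mem_univ j, mul_pos ((hlam j).lt_of_ne ?_) (hEu j)⟩
      simpa using (Ne.symm hj)
    linarith
  -- at least one of the two systems is solvable, via Farkas' lemma in dimension n+1
  set g : (Fin r ⊕ Fin r) ⊕ (Fin l ⊕ Fin m) → (Fin (n+1) → ℝ) := fun i =>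
    match i with
    | .inl (.inl i) => Fin.snoc (A i) 0
    | .inl (.inr i) => Fin.snoc (-(A i)) 0
    | .inr (.inl i) => Fin.snoc (B i) 0
    | .inr (.inr i) => Fin.snoc (E i) (-1) with hg
  have atleast : (∃ u : Fin n → ℝ, A.mulVec u = 0 ∧ (∀ i, 0 ≤ B.mulVec u i) ∧
        ∀ i, 0 < E.mulVec u i) ∨
      (∃ (θ : Fin r → ℝ) (η : Fin l → ℝ) (lam : Fin m → ℝ),
        (∀ i, 0 ≤ η i) ∧ (∀ i, 0 ≤ lam i) ∧ lam ≠ 0 ∧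
        A.transpose.mulVec θ + B.transpose.mulVec η + E.transpose.mulVec lam = 0) := by
    rcases farkas (n+1) g (Fin.snoc 0 (-1)) with ⟨lam, hlam, hsum⟩ | ⟨y, hy, hby⟩
    · -- cone membership gives system (2)
      refine Or.inr ⟨(fun i => lam (.inl (.inl i)) - lam (.inl (.inr i))),
        (fun i => lam (.inr (.inl i))), (fun i => lam (.inr (.inr i))),
        fun i => hlam _, fun i => hlam _, ?_, ?_⟩
      · -- lam-part is nonzero, from the last coordinate
        have h := congrFun hsum (Fin.last n)
        simp only [Finset.sum_apply, Pi.smul_apply, smul_eq_mul, Fintype.sum_sum_type,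
          hg, Fin.snoc_last, Pi.zero_apply] at h
        intro hz
        have : ∀ i : Fin m, lam (Sum.inr (Sum.inr i)) = 0 := fun i => congrFun hz i
        simp [this] at h
      · -- the linear identity, coordinatewise
        funext j
        have h := congrFun hsum (Fin.castSucc j)
        simp only [Finset.sum_apply, Pi.smul_apply, smul_eq_mul, Fintype.sum_sum_type,
          hg, Fin.snoc_castSucc, Pi.zero_apply, Pi.neg_apply, mul_neg, mul_zero,
          Finset.sum_neg_distrib] at h
        simp only [Pi.add_apply, Matrix.mulVec, dotProduct, Matrix.transpose_apply,
          Pi.zero_apply, mul_sub, Finset.sum_sub_distrib]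
        have e1 : ∀ (k : ℕ) (M : Matrix (Fin k) (Fin n) ℝ) (c : Fin k → ℝ),
            ∑ i, M i j * c i = ∑ i, c i * M i j := by
          intro k M c; exact Finset.sum_congr rfl fun i _ => mul_comm _ _
        rw [e1 r A, e1 r A, e1 l B, e1 m E]
        linarith [h]
    · -- separation gives system (1)
      set u0 : Fin n → ℝ := Fin.init y with hu0
      set s : ℝ := y (Fin.last n) with hs
      have hysnoc : y = Fin.snoc u0 s := (Fin.snoc_init_self y).symm
      have hsneg : s < 0 := by
        rw [hysnoc, dot_snoc] at hby
        simpa using hby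
      have hA1 : ∀ i, A i ⬝ᵥ u0 ≤ 0 := by
        intro i
        have := hy (.inl (.inl i))
        rw [hysnoc] at this
        simpa [hg, dot_snoc] using this
      have hA2 : ∀ i, -(A i) ⬝ᵥ u0 ≤ 0 := by
        intro i
        have := hy (.inl (.inr i))
        rw [hysnoc] at this
        simpa [hg, dot_snoc] using this
      have hB1 : ∀ i, B i ⬝ᵥ u0 ≤ 0 := by
        intro i
        have := hy (.inr (.inl i))
        rw [hysnoc] at this
        simpa [hg, dot_snoc] using this
      have hE1 : ∀ i, E i ⬝ᵥ u0 ≤ s := by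
        intro i
        have := hy (.inr (.inr i))
        rw [hysnoc] at this
        rw [hg] at this
        simp only [dot_snoc] at this
        linarith
      refine Or.inl ⟨-u0, ?_, ?_, ?_⟩
      · funext i
        have h1 := hA1 i
        have h2 := hA2 i
        rw [neg_dotProduct] at h2
        have : A i ⬝ᵥ u0 = 0 := le_antisymm h1 (by linarith)
        show A i ⬝ᵥ (-u0) = 0
        rw [dotProduct_neg, this, neg_zero]
      · intro i
        show 0 ≤ B i ⬝ᵥ (-u0)
        rw [dotProduct_neg]
        linarith [hB1 i]
      · intro i
        show 0 < E i ⬝ᵥ (-u0)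
        rw [dotProduct_neg]
        linarith [hE1 i]
  rcases atleast with hP | hQ
  · exact Or.inl ⟨hP, fun hQ => notboth ⟨hP, hQ⟩⟩
  · exact Or.inr ⟨hQ, fun hP => notboth ⟨hP, hQ⟩⟩
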